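/- The dihedral group D_{2m} of order 2m belongs to C₃ (i.e. ∑_{H ⊴ D_{2m}} |H| ≤ 4m) if and only if m is odd and σ(m) ≤ 2m. -/

import Mathlib

/-- The sum of the orders of all normal subgroups of `G`. -/
noncomputable def normalSum (G : Type*) [Group G] : ℕ :=
  ∑ᶠ (H : Subgroup G) (_ : H.Normal), Nat.card H

open DihedralGroup Subgroup

section Aux

variable {m : ℕ}

/-- In a finite cyclic group, subgroups of equal cardinality coincide. -/
lemma cyclic_subgroup_card_inj {G : Type*} [Group G] [Fintype G] [IsCyclic G]
    (H K : Subgroup G) (h : Nat.card H = Nat.card K) : H = K := by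
  classical
  have key : ∀ (L : Subgroup G), (L : Set G) = {x : G | x ^ (Nat.card L) = 1} := by
    intro L
    have hsub : ↑L ⊆ {x : G | x ^ (Nat.card L) = 1} := by
      intro x hx
      have h2 : (⟨x, hx⟩ : L) ^ (Nat.card L) = 1 := pow_card_eq_one'
      have h3 := congrArg (Subtype.val) h2
      simp only [SubmonoidClass.coe_pow, OneMemClass.coe_one] at h3
      exact h3
    have hpos : 0 < Nat.card L := Nat.card_pos
    have hle := IsCyclic.card_pow_eq_one_le (α := G) (n := Nat.card L) hpos
    have hcard : (L : Set G).toFinset.card = Nat.card L := by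
      simp [Set.toFinset_card, Nat.card_eq_fintype_card]
    have hsub' : (L : Set G).toFinset ⊆ ({x : G | x ^ (Nat.card L) = 1} : Finset G) := by
      intro x hx
      simp only [Set.mem_toFinset] at hx
      simpa using hsub hx
    have : (L : Set G).toFinset = ({x : G | x ^ (Nat.card L) = 1} : Finset G) :=
      Finset.eq_of_subset_of_card_le hsub' (by rw [hcard]; exact hle)
    have := congrArg (fun s : Finset G => (s : Set G)) this
    simpa using this
  have := key H
  rw [h, ← key K] at this
  exact SetLike.coe_injective this

instance zpowers_cyclic {G : Type*} [Group G] (g : G) : IsCyclic (zpowers g) := by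
  refine ⟨⟨⟨g, mem_zpowers g⟩, ?_⟩⟩
  rintro ⟨x, k, rfl⟩
  exact ⟨k, by ext; simp⟩

lemma r_one_zpow (z : ℤ) : (r 1 : DihedralGroup m) ^ z = r (z : ZMod m) := by
  obtain ⟨n, rfl | rfl⟩ := z.eq_nat_or_neg
  · rw [zpow_natCast, r_one_pow]; push_cast; rfl
  · rw [zpow_neg, zpow_natCast, r_one_pow]
    push_cast
    rfl

lemma mem_zpowers_r_one_iff [NeZero m] (x : DihedralGroup m) :
    x ∈ zpowers (r 1) ↔ ∃ i : ZMod m, x = r i := by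
  rw [mem_zpowers_iff]
  constructor
  · rintro ⟨z, rfl⟩
    exact ⟨z, (_root_.r_one_zpow z)⟩
  · rintro ⟨i, rfl⟩
    exact ⟨(i.val : ℤ), by rw [_root_.r_one_zpow]; norm_cast; rw [ZMod.natCast_val, ZMod.cast_id]⟩

lemma card_zpowers_r_one [NeZero m] : Nat.card (zpowers (r 1 : DihedralGroup m)) = m := by
  rw [Nat.card_zpowers, orderOf_r_one]

lemma normal_of_le_rot [NeZero m] (H : Subgroup (DihedralGroup m))
    (hH : H ≤ zpowers (r 1)) : H.Normal := by
  constructor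
  intro x hx g
  obtain ⟨i, rfl⟩ := (mem_zpowers_r_one_iff x).mp (hH hx)
  rcases g with j | j
  · have h1 : r j * r i * (r j)⁻¹ = r (i + (j + -j)) := by
      show r (j + i + -j) = _
      ring_nf
    rw [h1]
    simpa using hx
  · have h1 : sr j * r i * (sr j)⁻¹ = r (j - (j + i)) := rfl
    rw [h1]
    have h2 : r (j - (j + i)) = (r i)⁻¹ := by
      show _ = r (-i)
      ring_nf
    rw [h2]
    exact H.inv_mem hx

lemma eq_top_of_sr_mem [NeZero m] (hodd : Odd m) (H : Subgroup (DihedralGroup m))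
    [hN : H.Normal] {i : ZMod m} (hi : sr i ∈ H) : H = ⊤ := by
  have hc : Nat.Coprime 2 m := Nat.coprime_two_left.mpr hodd
  set u : (ZMod m)ˣ := ZMod.unitOfCoprime 2 hc with hu
  have hu2 : (u : ZMod m) = 2 := rfl
  have hsr : ∀ k : ZMod m, sr k ∈ H := by
    intro k
    set j : ZMod m := (↑u⁻¹ : ZMod m) * (i - k) with hj
    have hconj := hN.conj_mem _ hi (r j)
    have he : r j * sr i * (r j)⁻¹ = sr (i - j + -j) := rfl
    rw [he] at hconj
    have : i - j + -j = k := by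
      have h2j : (2 : ZMod m) * j = i - k := by
        rw [hj, ← mul_assoc, ← hu2, ← Units.val_mul, mul_inv_cancel]
        simp
      have : i - j + -j = i - 2 * j := by ring
      rw [this, h2j]
      ring
    rwa [this] at hconj
  rw [eq_top_iff]
  rintro (t | t) -
  · have : sr 0 * sr t = r t := by simp
    rw [← this]
    exact H.mul_mem (hsr 0) (hsr t)
  · exact hsr t

lemma normal_classification [NeZero m] (hodd : Odd m) (H : Subgroup (DihedralGroup m))
    (hN : H.Normal) : H ≤ zpowers (r 1) ∨ H = ⊤ := by
  by_cases h : ∃ i, sr i ∈ H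
  · obtain ⟨i, hi⟩ := h
    exact Or.inr (eq_top_of_sr_mem hodd H (hN := hN) hi)
  · push_neg at h
    left
    rintro (t | t) ht
    · exact (mem_zpowers_r_one_iff _).mpr ⟨t, rfl⟩
    · exact absurd ht (h t)

lemma rot_card_inj [NeZero m] {H K : Subgroup (DihedralGroup m)}
    (hH : H ≤ zpowers (r 1)) (hK : K ≤ zpowers (r 1))
    (h : Nat.card H = Nat.card K) : H = K := by
  set R := zpowers (r 1 : DihedralGroup m) with hR
  letI : Fintype R := Fintype.ofFinite _
  have hc : Nat.card (H.subgroupOf R) = Nat.card (K.subgroupOf R) := by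
    rw [Nat.card_congr (subgroupOfEquivOfLe hH).toEquiv,
      Nat.card_congr (subgroupOfEquivOfLe hK).toEquiv, h]
  have heq := cyclic_subgroup_card_inj (G := R) _ _ hc
  have hH' := congrArg (map R.subtype) heq
  rwa [subgroupOf_map_subtype, subgroupOf_map_subtype, inf_eq_left.mpr hH,
    inf_eq_left.mpr hK] at hH'

lemma card_zpowers_r_div [NeZero m] {d : ℕ} (hd : d ∣ m) :
    Nat.card (zpowers (r ((m / d : ℕ) : ZMod m))) = d := by
  rw [Nat.card_zpowers, orderOf_r, ZMod.val_natCast]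
  have h1 : Nat.gcd m (m / d % m) = Nat.gcd m (m / d) := by
    rw [Nat.gcd_comm, ← Nat.gcd_rec]
  rw [h1, Nat.gcd_eq_right (Nat.div_dvd_of_dvd hd)]
  exact Nat.div_div_self hd (NeZero.ne m)

/-- The parity homomorphism for even `m`. -/
def toZMod2 (h : (2 : ℕ) ∣ m) : DihedralGroup m →* Multiplicative (ZMod 2) where
  toFun x := match x with
    | r i => Multiplicative.ofAdd (ZMod.castHom h (ZMod 2) i)
    | sr i => Multiplicative.ofAdd (ZMod.castHom h (ZMod 2) i)
  map_one' := by
    show Multiplicative.ofAdd (ZMod.castHom h (ZMod 2) 0) = 1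
    simp
  map_mul' := by
    rintro (i | i) (j | j) <;>
      simp only [r_mul_r, r_mul_sr, sr_mul_r, sr_mul_sr, ← ofAdd_add, map_add, map_sub] <;>
      congr 1 <;> rw [sub_eq_add_neg, CharTwo.neg_eq] <;> ring

lemma toZMod2_surj (h : (2 : ℕ) ∣ m) : Function.Surjective (toZMod2 (m := m) h) := by
  intro y
  refine ⟨r ((Multiplicative.toAdd y).val : ZMod m), ?_⟩
  show Multiplicative.ofAdd (ZMod.castHom h (ZMod 2) _) = y
  rw [map_natCast]
  simp [ZMod.natCast_val, ZMod.cast_id]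

lemma card_ker_toZMod2 [NeZero m] (h : (2 : ℕ) ∣ m) :
    Nat.card (toZMod2 (m := m) h).ker = m := by
  have hidx : (toZMod2 (m := m) h).ker.index = 2 := by
    rw [index_ker, MonoidHom.range_eq_top.mpr (toZMod2_surj h), card_top]
    simp [Nat.card_eq_fintype_card]
  have hmul := Subgroup.card_mul_index (toZMod2 (m := m) h).ker
  rw [hidx, DihedralGroup.nat_card] at hmul
  omega

lemma sr_zero_not_mem_rot [NeZero m] : sr 0 ∉ zpowers (r 1 : DihedralGroup m) := by
  rw [mem_zpowers_r_one_iff]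
  rintro ⟨i, hi⟩
  exact absurd hi (by simp)

end Aux

theorem dihedral_mem_C3_iff (m : ℕ) (hm : 3 ≤ m) :
    normalSum (DihedralGroup m) ≤ 2 * Nat.card (DihedralGroup m) ↔
      Odd m ∧ (∑ d ∈ m.divisors, d) ≤ 2 * m := by
  haveI : NeZero m := ⟨by omega⟩
  classical
  letI : Fintype (Subgroup (DihedralGroup m)) := Fintype.ofFinite _
  have hns : normalSum (DihedralGroup m) =
      ∑ H ∈ Finset.univ.filter (fun H : Subgroup (DihedralGroup m) => H.Normal),
        Nat.card H := by
    rw [normalSum, finsum_eq_sum_of_fintype, Finset.sum_filter]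
    congr 1
    ext H
    exact finsum_eq_if
  rw [hns, DihedralGroup.nat_card]
  by_cases hodd : Odd m
  · -- odd case: compute the sum exactly
    have hfil : Finset.univ.filter (fun H : Subgroup (DihedralGroup m) => H.Normal) =
        insert ⊤ (Finset.univ.filter
          (fun H : Subgroup (DihedralGroup m) => H ≤ zpowers (r 1))) := by
      ext H
      simp only [Finset.mem_filter, Finset.mem_univ, true_and, Finset.mem_insert]
      constructor
      · intro hN
        rcases normal_classification hodd H hN with h | h
        · exact Or.inr h
        · exact Or.inl h
      · rintro (rfl | h)
        · exact inferInstance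
        · exact normal_of_le_rot H h
    have htopnot : (⊤ : Subgroup (DihedralGroup m)) ∉
        Finset.univ.filter (fun H : Subgroup (DihedralGroup m) => H ≤ zpowers (r 1)) := by
      simp only [Finset.mem_filter, Finset.mem_univ, true_and]
      intro h
      exact sr_zero_not_mem_rot (h (mem_top _))
    rw [hfil, Finset.sum_insert htopnot, Subgroup.card_top, DihedralGroup.nat_card]
    have hsum : ∑ H ∈ Finset.univ.filter
        (fun H : Subgroup (DihedralGroup m) => H ≤ zpowers (r 1)), Nat.card H =
        ∑ d ∈ m.divisors, d := by
      refine Finset.sum_bij (fun H _ => Nat.card H) ?_ ?_ ?_ ?_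
      · intro H hH
        simp only [Finset.mem_filter, Finset.mem_univ, true_and] at hH
        rw [Nat.mem_divisors]
        show Nat.card H ∣ m ∧ m ≠ 0
        refine ⟨?_, NeZero.ne m⟩
        have h1 : Nat.card H = Nat.card (H.subgroupOf (zpowers (r 1))) :=
          (Nat.card_congr (subgroupOfEquivOfLe hH).toEquiv).symm
        have h2 : Nat.card (H.subgroupOf (zpowers (r 1))) ∣
            Nat.card (zpowers (r 1 : DihedralGroup m)) :=
          Subgroup.card_subgroup_dvd_card _
        rw [card_zpowers_r_one] at h2
        rw [h1]
        exact h2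
      · intro H hH K hK h
        simp only [Finset.mem_filter, Finset.mem_univ, true_and] at hH hK
        exact rot_card_inj hH hK h
      · intro d hd
        rw [Nat.mem_divisors] at hd
        refine ⟨zpowers (r ((m / d : ℕ) : ZMod m)), ?_, card_zpowers_r_div hd.1⟩
        simp only [Finset.mem_filter, Finset.mem_univ, true_and]
        exact zpowers_le.mpr ((mem_zpowers_r_one_iff _).mpr ⟨_, rfl⟩)
      · intro H _
        rfl
    rw [hsum]
    simp only [hodd, true_and]
    omega
  · -- even case: both sides false
    simp only [hodd, false_and, iff_false, not_le]
    have h2 : (2 : ℕ) ∣ m := (Nat.not_odd_iff_even.mp hodd).two_dvd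
    set K := (toZMod2 (m := m) h2).ker with hK
    set R := zpowers (r 1 : DihedralGroup m) with hR
    have hKR : K ≠ R := by
      intro h
      have h1 : sr 0 ∈ K := by
        show toZMod2 h2 (sr 0) = 1
        show Multiplicative.ofAdd (ZMod.castHom h2 (ZMod 2) 0) = 1
        simp
      rw [h] at h1
      exact sr_zero_not_mem_rot h1
    have hcards : Nat.card (⊥ : Subgroup (DihedralGroup m)) = 1 ∧
        Nat.card R = m ∧ Nat.card K = m ∧
        Nat.card (⊤ : Subgroup (DihedralGroup m)) = 2 * m := by
      refine ⟨Subgroup.card_bot, card_zpowers_r_one, card_ker_toZMod2 h2, ?_⟩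
      rw [Subgroup.card_top, DihedralGroup.nat_card]
    obtain ⟨hb, hr, hk', ht⟩ := hcards
    set S : Finset (Subgroup (DihedralGroup m)) := {⊥, R, K, ⊤} with hS
    have hSsub : S ⊆ Finset.univ.filter
        (fun H : Subgroup (DihedralGroup m) => H.Normal) := by
      intro H hH
      simp only [hS, Finset.mem_insert, Finset.mem_singleton] at hH
      simp only [Finset.mem_filter, Finset.mem_univ, true_and]
      rcases hH with rfl | rfl | rfl | rfl
      · exact inferInstance
      · exact normal_of_le_rot _ le_rfl
      · exact MonoidHom.normal_ker _
      · exact inferInstance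
    have hSsum : ∑ H ∈ S, Nat.card H = 4 * m + 1 := by
      have hne1 : (⊥ : Subgroup (DihedralGroup m)) ∉ ({R, K, ⊤} : Finset _) := by
        simp only [Finset.mem_insert, Finset.mem_singleton]
        push_neg
        refine ⟨?_, ?_, ?_⟩ <;> intro h <;>
          [skip; skip; skip]
        · rw [← h] at hr; rw [Subgroup.card_bot] at hr; omega
        · rw [← h] at hk'; rw [Subgroup.card_bot] at hk'; omega
        · rw [← h] at ht; rw [Subgroup.card_bot] at ht; omega
      have hne2 : R ∉ ({K, ⊤} : Finset _) := by
        simp only [Finset.mem_insert, Finset.mem_singleton]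
        push_neg
        constructor
        · exact fun h => hKR h.symm
        · intro h
          rw [h, Subgroup.card_top, DihedralGroup.nat_card] at hr
          omega
      have hne3 : K ∉ ({⊤} : Finset _) := by
        simp only [Finset.mem_singleton]
        intro h
        rw [h, Subgroup.card_top, DihedralGroup.nat_card] at hk'
        omega
      rw [hS, Finset.sum_insert hne1, Finset.sum_insert hne2, Finset.sum_insert hne3,
        Finset.sum_singleton, hb, hr, hk', ht]
      omega
    have hle := Finset.sum_le_sum_of_subset (f := fun H : Subgroup (DihedralGroup m) =>
      Nat.card H) hSsub
    rw [hSsum] at hle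
    exact lt_of_lt_of_le (by omega) hle
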